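/- Let ψ : [0,1) → [0,∞) be integrable with lim_{x↑1} ψ(x) = ψ₁ ∈ (0,∞), and let σ > 0. Then for fixed positive reals t₁, t₂, (σ²/(n log n)) · ∫_0^1 ∑_{k=1}^{⌊n t₁⌋} ∑_{ℓ=1}^{⌊n t₂⌋} (a^{|k−ℓ|}/(1−a²)) ψ(a)(1−a) da → σ² ψ₁ min(t₁, t₂) as n → ∞. -/

import Mathlib

open Finset Filter MeasureTheory

namespace ARaux

noncomputable def Hr (n : ℕ) : ℝ := ∑ j ∈ Finset.range n, (1:ℝ)/(j+1)

lemma Hr_eq (n : ℕ) : Hr n = (harmonic n : ℝ) := by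
  simp [Hr, harmonic, one_div]

lemma log_le_Hr (n : ℕ) : Real.log (n+1) ≤ Hr n := by
  rw [Hr_eq]
  exact_mod_cast log_add_one_le_harmonic n

lemma Hr_le (n : ℕ) : Hr n ≤ 1 + Real.log n := by
  rw [Hr_eq]
  exact harmonic_le_one_add_log n

lemma Hr_mono : Monotone Hr := by
  intro a b hab
  apply Finset.sum_le_sum_of_subset_of_nonneg (Finset.range_subset_range.2 hab)
  intro i _ _
  positivity

lemma Hr_nonneg (n : ℕ) : 0 ≤ Hr n := by
  unfold Hr; positivity

/-- reindexing the inner sum -/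
lemma inner_eq (f : ℕ → ℝ) (k m₂ : ℕ) (hk1 : 1 ≤ k) (hk2 : k ≤ m₂) :
    ∑ ℓ ∈ Finset.Icc 1 m₂, f (((k:ℤ) - ℓ).natAbs)
      = ∑ j ∈ Finset.range k, f j + ∑ j ∈ Finset.range (m₂ - k + 1), f j - f 0 := by
  have hsplit : Finset.Icc 1 m₂ = Finset.Icc 1 k ∪ Finset.Icc (k+1) m₂ := by
    ext x; simp only [Finset.mem_Icc, Finset.mem_union]; omega
  have hdisj : Disjoint (Finset.Icc 1 k) (Finset.Icc (k+1) m₂) := by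
    rw [Finset.disjoint_left]; intro x hx hx'
    simp only [Finset.mem_Icc] at hx hx'; omega
  have hsum : ∑ ℓ ∈ Finset.Icc 1 m₂, f (((k:ℤ) - ℓ).natAbs)
      = ∑ ℓ ∈ Finset.Icc 1 k, f (((k:ℤ) - ℓ).natAbs)
        + ∑ ℓ ∈ Finset.Icc (k+1) m₂, f (((k:ℤ) - ℓ).natAbs) := by
    rw [hsplit, Finset.sum_union hdisj]
  have h1 : ∑ ℓ ∈ Finset.Icc 1 k, f (((k:ℤ) - ℓ).natAbs) = ∑ j ∈ Finset.range k, f j := by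
    apply Finset.sum_nbij' (i := fun ℓ => k - ℓ) (j := fun j => k - j)
    · intro a ha; simp only [Finset.mem_Icc] at ha; simp only [Finset.mem_range]; omega
    · intro a ha; simp only [Finset.mem_range] at ha; simp only [Finset.mem_Icc]; omega
    · intro a ha; simp only [Finset.mem_Icc] at ha; omega
    · intro a ha; simp only [Finset.mem_range] at ha; omega
    · intro a ha; simp only [Finset.mem_Icc] at ha
      congr 1; omega
  have h2 : ∑ ℓ ∈ Finset.Icc (k+1) m₂, f (((k:ℤ) - ℓ).natAbs)
      = ∑ j ∈ Finset.Icc 1 (m₂ - k), f j := by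
    apply Finset.sum_nbij' (i := fun ℓ => ℓ - k) (j := fun j => j + k)
    · intro a ha; simp only [Finset.mem_Icc] at ha ⊢; omega
    · intro a ha; simp only [Finset.mem_Icc] at ha ⊢; omega
    · intro a ha; simp only [Finset.mem_Icc] at ha; omega
    · intro a ha; simp only [Finset.mem_Icc] at ha; omega
    · intro a ha; simp only [Finset.mem_Icc] at ha
      congr 1; omega
  have h3 : ∑ j ∈ Finset.range (m₂ - k + 1), f j
      = f 0 + ∑ j ∈ Finset.Icc 1 (m₂ - k), f j := by
    have : Finset.range (m₂ - k + 1) = insert 0 (Finset.Icc 1 (m₂ - k)) := by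
      ext x; simp only [Finset.mem_range, Finset.mem_insert, Finset.mem_Icc]; omega
    rw [this, Finset.sum_insert (by simp)]
  rw [h1, h2] at hsum
  rw [hsum, h3]
  ring

lemma natAbs_symm (k ℓ : ℕ) : (((k:ℤ) - ℓ).natAbs) = (((ℓ:ℤ) - k).natAbs) := by omega

lemma double_symm (f : ℕ → ℝ) (m₁ m₂ : ℕ) :
    ∑ k ∈ Finset.Icc 1 m₁, ∑ ℓ ∈ Finset.Icc 1 m₂, f (((k:ℤ) - ℓ).natAbs)
      = ∑ k ∈ Finset.Icc 1 m₂, ∑ ℓ ∈ Finset.Icc 1 m₁, f (((k:ℤ) - ℓ).natAbs) := by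
  rw [Finset.sum_comm]
  refine Finset.sum_congr rfl fun k _ => Finset.sum_congr rfl fun ℓ _ => ?_
  rw [natAbs_symm]

end ARaux

namespace ARaux2
open ARaux

noncomputable def w (j : ℕ) : ℝ := 1/((j:ℝ)+1)

lemma sum_w (n : ℕ) : ∑ j ∈ Finset.range n, w j = Hr n := rfl

lemma w_nonneg (j : ℕ) : 0 ≤ w j := by unfold w; positivity

noncomputable def Lf (m : ℕ) : ℝ := ∑ k ∈ Finset.Icc 1 m, Real.log k

lemma Lf_lower (m : ℕ) : (m:ℝ) * Real.log m - m ≤ Lf m := by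
  induction m with
  | zero => simp [Lf]
  | succ m ih =>
    have hstep : Lf (m+1) = Lf m + Real.log (m+1) := by
      unfold Lf
      rw [Finset.sum_Icc_succ_top (by omega)]
      push_cast; ring_nf
    rcases Nat.eq_zero_or_pos m with hm | hm
    · subst hm
      simp [hstep, Lf]
    · have hmpos : (0:ℝ) < m := by exact_mod_cast hm
      have hlog : Real.log ((m:ℝ)+1) - Real.log m ≤ 1/(m:ℝ) := by
        rw [← Real.log_div (by positivity) (by positivity)]
        have := Real.log_le_sub_one_of_pos (x := ((m:ℝ)+1)/m) (by positivity)
        have h2 : ((m:ℝ)+1)/m - 1 = 1/m := by field_simp; ring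
        linarith
      have hmul : (m:ℝ) * (Real.log ((m:ℝ)+1) - Real.log m) ≤ 1 := by
        calc (m:ℝ) * (Real.log ((m:ℝ)+1) - Real.log m) ≤ (m:ℝ) * (1/m) := by
              apply mul_le_mul_of_nonneg_left hlog (le_of_lt hmpos)
          _ = 1 := by field_simp
      rw [hstep]
      push_cast
      nlinarith [ih]

lemma Lf_reflect (m : ℕ) :
    ∑ k ∈ Finset.Icc 1 m, Real.log ((m - k + 1 : ℕ) : ℝ) = Lf m := by
  unfold Lf
  apply Finset.sum_nbij' (i := fun k => m - k + 1) (j := fun k => m - k + 1)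
  · intro a ha; simp only [Finset.mem_Icc] at ha ⊢; omega
  · intro a ha; simp only [Finset.mem_Icc] at ha ⊢; omega
  · intro a ha; simp only [Finset.mem_Icc] at ha; omega
  · intro a ha; simp only [Finset.mem_Icc] at ha; omega
  · intro a ha; rfl

lemma inner_w (k m₂ : ℕ) (hk1 : 1 ≤ k) (hk2 : k ≤ m₂) :
    ∑ ℓ ∈ Finset.Icc 1 m₂, w (((k:ℤ) - ℓ).natAbs) = Hr k + Hr (m₂ - k + 1) - 1 := by
  rw [inner_eq w k m₂ hk1 hk2, sum_w, sum_w]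
  norm_num [w]

lemma A_upper (m₁ m₂ : ℕ) (h : m₁ ≤ m₂) :
    ∑ k ∈ Finset.Icc 1 m₁, ∑ ℓ ∈ Finset.Icc 1 m₂, w (((k:ℤ) - ℓ).natAbs)
      ≤ 2 * m₁ * Hr m₂ := by
  have : ∀ k ∈ Finset.Icc 1 m₁,
      ∑ ℓ ∈ Finset.Icc 1 m₂, w (((k:ℤ) - ℓ).natAbs) ≤ 2 * Hr m₂ := by
    intro k hk
    simp only [Finset.mem_Icc] at hk
    rw [inner_w k m₂ hk.1 (hk.2.trans h)]
    have h1 : Hr k ≤ Hr m₂ := Hr_mono (hk.2.trans h)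
    have h2 : Hr (m₂ - k + 1) ≤ Hr m₂ := Hr_mono (by omega)
    have := Hr_nonneg m₂
    linarith
  calc ∑ k ∈ Finset.Icc 1 m₁, ∑ ℓ ∈ Finset.Icc 1 m₂, w (((k:ℤ) - ℓ).natAbs)
      ≤ ∑ k ∈ Finset.Icc 1 m₁, 2 * Hr m₂ := Finset.sum_le_sum this
    _ = 2 * m₁ * Hr m₂ := by
        rw [Finset.sum_const, Nat.card_Icc]
        simp; ring

lemma A_lower (m₁ m₂ : ℕ) (h : m₁ ≤ m₂) :
    2 * Lf m₁ - m₁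
      ≤ ∑ k ∈ Finset.Icc 1 m₁, ∑ ℓ ∈ Finset.Icc 1 m₂, w (((k:ℤ) - ℓ).natAbs) := by
  have key : ∀ k ∈ Finset.Icc 1 m₁,
      Real.log k + Real.log ((m₁ - k + 1 : ℕ) : ℝ) - 1
        ≤ ∑ ℓ ∈ Finset.Icc 1 m₂, w (((k:ℤ) - ℓ).natAbs) := by
    intro k hk
    simp only [Finset.mem_Icc] at hk
    rw [inner_w k m₂ hk.1 (hk.2.trans h)]
    have h1 : Real.log k ≤ Hr k := by
      refine le_trans ?_ (log_le_Hr k)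
      apply Real.log_le_log (by exact_mod_cast hk.1)
      linarith
    have h2 : Real.log ((m₁ - k + 1 : ℕ) : ℝ) ≤ Hr (m₂ - k + 1) := by
      refine le_trans ?_ (log_le_Hr (m₂ - k + 1))
      apply Real.log_le_log
      · exact_mod_cast Nat.succ_le_iff.mp (show 1 ≤ m₁ - k + 1 by omega)
      · have : (m₁ - k + 1 : ℕ) ≤ (m₂ - k + 1 : ℕ) + 1 := by omega
        calc ((m₁ - k + 1 : ℕ) : ℝ) ≤ (((m₂ - k + 1 : ℕ) + 1 : ℕ) : ℝ) := by exact_mod_cast this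
          _ = ((m₂ - k + 1 : ℕ) : ℝ) + 1 := by push_cast; ring
    linarith
  calc 2 * Lf m₁ - m₁
      = ∑ k ∈ Finset.Icc 1 m₁, (Real.log k + Real.log ((m₁ - k + 1 : ℕ) : ℝ) - 1) := by
        rw [Finset.sum_sub_distrib, Finset.sum_add_distrib, Lf_reflect]
        rw [Finset.sum_const, Nat.card_Icc]
        simp [Lf]; ring
    _ ≤ _ := Finset.sum_le_sum key

lemma geom_sum_le' (q : ℝ) (hq0 : 0 ≤ q) (hq1 : q < 1) (n : ℕ) :
    ∑ j ∈ Finset.range n, q ^ j ≤ 1/(1-q) := by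
  have h := geom_sum_eq (ne_of_lt hq1) n
  rw [h]
  have he : (q ^ n - 1)/(q - 1) = (1 - q ^ n)/(1 - q) := by
    rw [div_eq_div_iff (by linarith) (by linarith)]; ring
  rw [he]
  have hqn : (0:ℝ) ≤ q ^ n := by positivity
  gcongr
  · linarith

lemma G_upper (m₁ m₂ : ℕ) (h : m₁ ≤ m₂) (q : ℝ) (hq0 : 0 ≤ q) (hq1 : q < 1) :
    ∑ k ∈ Finset.Icc 1 m₁, ∑ ℓ ∈ Finset.Icc 1 m₂, q ^ (((k:ℤ) - ℓ).natAbs)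
      ≤ m₁ * (2/(1-q)) := by
  have : ∀ k ∈ Finset.Icc 1 m₁,
      ∑ ℓ ∈ Finset.Icc 1 m₂, q ^ (((k:ℤ) - ℓ).natAbs) ≤ 2/(1-q) := by
    intro k hk
    simp only [Finset.mem_Icc] at hk
    rw [inner_eq (fun j => q ^ j) k m₂ hk.1 (hk.2.trans h)]
    have g1 := geom_sum_le' q hq0 hq1 k
    have g2 := geom_sum_le' q hq0 hq1 (m₂ - k + 1)
    simp only [pow_zero]
    have : (0:ℝ) < 1 - q := by linarith
    have h1q : (1:ℝ) ≤ 1/(1-q) := by rw [le_div_iff₀ this]; linarith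
    have h2q : (2:ℝ)/(1-q) = 1/(1-q) + 1/(1-q) := by ring
    linarith
  calc ∑ k ∈ Finset.Icc 1 m₁, ∑ ℓ ∈ Finset.Icc 1 m₂, q ^ (((k:ℤ) - ℓ).natAbs)
      ≤ ∑ k ∈ Finset.Icc 1 m₁, 2/(1-q) := Finset.sum_le_sum this
    _ = m₁ * (2/(1-q)) := by
        rw [Finset.sum_const, Nat.card_Icc]
        simp

end ARaux2

namespace ARaux3
open ARaux ARaux2

lemma hlogn : Tendsto (fun n : ℕ => Real.log n) atTop atTop :=
  Real.tendsto_log_atTop.comp tendsto_natCast_atTop_atTop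

lemma hinvlog : Tendsto (fun n : ℕ => 1 / Real.log n) atTop (nhds 0) := by
  simpa [one_div, Pi.inv_def] using hlogn.inv_tendsto_atTop

lemma floor_div_tendsto (t : ℝ) (ht : 0 < t) :
    Tendsto (fun n : ℕ => (⌊(n:ℝ) * t⌋₊ : ℝ) / n) atTop (nhds t) := by
  have := (tendsto_nat_floor_mul_div_atTop (le_of_lt ht)).comp
    (tendsto_natCast_atTop_atTop (R := ℝ))
  simpa [Function.comp_def, mul_comm] using this

lemma log_lin (c : ℝ) (hc : 0 < c) :
    Tendsto (fun n : ℕ => Real.log (c * n) / Real.log n) atTop (nhds 1) := by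
  have h1 : Tendsto (fun n : ℕ => Real.log c / Real.log n + 1) atTop (nhds (0 + 1)) :=
    (tendsto_const_nhds.div_atTop hlogn).add tendsto_const_nhds
  rw [zero_add] at h1
  apply h1.congr'
  filter_upwards [eventually_ge_atTop 2] with n hn
  have hn1 : (1:ℝ) < (n:ℝ) := by exact_mod_cast hn
  have hlnpos : 0 < Real.log n := Real.log_pos hn1
  rw [Real.log_mul (ne_of_gt hc) (by positivity)]
  field_simp

lemma log_ratio_aux (x : ℕ → ℝ) (c₁ c₂ : ℝ) (hc₁ : 0 < c₁) (hc₂ : 0 < c₂)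
    (hev : ∀ᶠ n : ℕ in atTop, c₁ * n ≤ x n ∧ x n ≤ c₂ * n) :
    Tendsto (fun n : ℕ => Real.log (x n) / Real.log n) atTop (nhds 1) := by
  apply tendsto_of_tendsto_of_tendsto_of_le_of_le' (log_lin c₁ hc₁) (log_lin c₂ hc₂)
  · filter_upwards [hev, eventually_ge_atTop 2] with n hn hn2
    have hn1 : (1:ℝ) < (n:ℝ) := by exact_mod_cast hn2
    have hlnpos : 0 < Real.log n := Real.log_pos hn1
    have hx : Real.log (c₁ * n) ≤ Real.log (x n) :=
      Real.log_le_log (by positivity) hn.1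
    exact div_le_div_of_nonneg_right hx hlnpos.le |>.trans_eq rfl
  · filter_upwards [hev, eventually_ge_atTop 2] with n hn hn2
    have hn1 : (1:ℝ) < (n:ℝ) := by exact_mod_cast hn2
    have hlnpos : 0 < Real.log n := Real.log_pos hn1
    have hx : Real.log (x n) ≤ Real.log (c₂ * n) := by
      apply Real.log_le_log ?_ hn.2
      calc (0:ℝ) < c₁ * n := by positivity
        _ ≤ x n := hn.1
    exact div_le_div_of_nonneg_right hx hlnpos.le |>.trans_eq rfl

lemma log_floor_ratio (t : ℝ) (ht : 0 < t) :
    Tendsto (fun n : ℕ => Real.log (⌊(n:ℝ) * t⌋₊ : ℝ) / Real.log n) atTop (nhds 1) := by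
  apply log_ratio_aux _ (t/2) t (by positivity) ht
  have hev : ∀ᶠ n : ℕ in atTop, (2:ℝ) ≤ (n:ℝ) * t := by
    have : Tendsto (fun n : ℕ => (n:ℝ) * t) atTop atTop :=
      Tendsto.atTop_mul_const ht (tendsto_natCast_atTop_atTop (R := ℝ))
    exact this.eventually_ge_atTop 2
  filter_upwards [hev] with n hn
  constructor
  · have h1 : (n:ℝ) * t - 1 ≤ ⌊(n:ℝ) * t⌋₊ := by
      have := Nat.lt_floor_add_one ((n:ℝ) * t)
      linarith
    calc t/2 * n = (n:ℝ) * t - (n:ℝ) * t / 2 := by ring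
      _ ≤ (n:ℝ) * t - 1 := by linarith
      _ ≤ _ := h1
  · have h2 : (⌊(n:ℝ) * t⌋₊ : ℝ) ≤ (n:ℝ) * t := Nat.floor_le (by linarith)
    linarith [h2]

lemma A_tendsto_le (t₁ t₂ : ℝ) (ht₁ : 0 < t₁) (ht₂ : 0 < t₂) (h : t₁ ≤ t₂) :
    Tendsto (fun n : ℕ =>
      (∑ k ∈ Finset.Icc 1 ⌊(n:ℝ)*t₁⌋₊, ∑ ℓ ∈ Finset.Icc 1 ⌊(n:ℝ)*t₂⌋₊,
        w (((k:ℤ) - ℓ).natAbs)) / ((n:ℝ) * Real.log n)) atTop (nhds (2 * t₁)) := by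
  have hm₁ := floor_div_tendsto t₁ ht₁
  have hlog₁ := log_floor_ratio t₁ ht₁
  have hlog₂ := log_floor_ratio t₂ ht₂
  have hL : Tendsto (fun n : ℕ =>
      2 * ((⌊(n:ℝ)*t₁⌋₊ : ℝ)/n) * (Real.log (⌊(n:ℝ)*t₁⌋₊ : ℝ)/Real.log n)
        - 3 * ((⌊(n:ℝ)*t₁⌋₊ : ℝ)/n) * (1/Real.log n)) atTop
      (nhds (2 * t₁ * 1 - 3 * t₁ * 0)) :=
    ((hm₁.const_mul 2).mul hlog₁).sub ((hm₁.const_mul 3).mul hinvlog)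
  have hU : Tendsto (fun n : ℕ =>
      2 * ((⌊(n:ℝ)*t₁⌋₊ : ℝ)/n) * ((1/Real.log n) + Real.log (⌊(n:ℝ)*t₂⌋₊ : ℝ)/Real.log n))
      atTop (nhds (2 * t₁ * (0 + 1))) :=
    (hm₁.const_mul 2).mul (hinvlog.add hlog₂)
  rw [show (2:ℝ) * t₁ * 1 - 3 * t₁ * 0 = 2 * t₁ by ring] at hL
  rw [show (2:ℝ) * t₁ * (0 + 1) = 2 * t₁ by ring] at hU
  apply tendsto_of_tendsto_of_tendsto_of_le_of_le' hL hU
  · -- lower bound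
    have hev : ∀ᶠ n : ℕ in atTop, (2:ℝ) ≤ (n:ℝ) * t₁ := by
      have : Tendsto (fun n : ℕ => (n:ℝ) * t₁) atTop atTop :=
        Tendsto.atTop_mul_const ht₁ (tendsto_natCast_atTop_atTop (R := ℝ))
      exact this.eventually_ge_atTop 2
    filter_upwards [eventually_ge_atTop 2, hev] with n hn2 hnt
    set m₁ := ⌊(n:ℝ)*t₁⌋₊ with hm₁def
    set m₂ := ⌊(n:ℝ)*t₂⌋₊ with hm₂def
    have hmle : m₁ ≤ m₂ := Nat.floor_le_floor (mul_le_mul_of_nonneg_left h (Nat.cast_nonneg n))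
    have hn1 : (1:ℝ) < (n:ℝ) := by exact_mod_cast hn2
    have hlnpos : 0 < Real.log n := Real.log_pos hn1
    have hnpos : (0:ℝ) < n := by linarith
    have hA := A_lower m₁ m₂ hmle
    have hLf := Lf_lower m₁
    have key : 2 * ((m₁:ℝ) * Real.log m₁ - m₁) - m₁
        ≤ ∑ k ∈ Finset.Icc 1 m₁, ∑ ℓ ∈ Finset.Icc 1 m₂, w (((k:ℤ) - ℓ).natAbs) := by
      linarith
    rw [show 2 * ((m₁:ℝ)/n) * (Real.log m₁/Real.log n) - 3 * ((m₁:ℝ)/n) * (1/Real.log n)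
      = (2 * ((m₁:ℝ) * Real.log m₁ - m₁) - m₁) / ((n:ℝ) * Real.log n) by
        field_simp; ring]
    exact div_le_div_of_nonneg_right key (by positivity) |>.trans_eq rfl
  · -- upper bound
    have hev : ∀ᶠ n : ℕ in atTop, (2:ℝ) ≤ (n:ℝ) * t₁ := by
      have : Tendsto (fun n : ℕ => (n:ℝ) * t₁) atTop atTop :=
        Tendsto.atTop_mul_const ht₁ (tendsto_natCast_atTop_atTop (R := ℝ))
      exact this.eventually_ge_atTop 2
    filter_upwards [eventually_ge_atTop 2, hev] with n hn2 hnt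
    set m₁ := ⌊(n:ℝ)*t₁⌋₊ with hm₁def
    set m₂ := ⌊(n:ℝ)*t₂⌋₊ with hm₂def
    have hmle : m₁ ≤ m₂ := Nat.floor_le_floor (mul_le_mul_of_nonneg_left h (Nat.cast_nonneg n))
    have hn1 : (1:ℝ) < (n:ℝ) := by exact_mod_cast hn2
    have hlnpos : 0 < Real.log n := Real.log_pos hn1
    have hnpos : (0:ℝ) < n := by linarith
    have hA := A_upper m₁ m₂ hmle
    have hHr := Hr_le m₂
    have hm₁0 : (0:ℝ) ≤ m₁ := Nat.cast_nonneg m₁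
    have key : ∑ k ∈ Finset.Icc 1 m₁, ∑ ℓ ∈ Finset.Icc 1 m₂, w (((k:ℤ) - ℓ).natAbs)
        ≤ 2 * (m₁:ℝ) * (1 + Real.log m₂) := by
      calc _ ≤ 2 * (m₁:ℝ) * Hr m₂ := hA
        _ ≤ 2 * (m₁:ℝ) * (1 + Real.log m₂) := by nlinarith
    rw [show 2 * ((m₁:ℝ)/n) * ((1/Real.log n) + Real.log m₂/Real.log n)
      = (2 * (m₁:ℝ) * (1 + Real.log m₂)) / ((n:ℝ) * Real.log n) by
        field_simp]
    exact div_le_div_of_nonneg_right key (by positivity) |>.trans_eq rfl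

lemma A_tendsto (t₁ t₂ : ℝ) (ht₁ : 0 < t₁) (ht₂ : 0 < t₂) :
    Tendsto (fun n : ℕ =>
      (∑ k ∈ Finset.Icc 1 ⌊(n:ℝ)*t₁⌋₊, ∑ ℓ ∈ Finset.Icc 1 ⌊(n:ℝ)*t₂⌋₊,
        w (((k:ℤ) - ℓ).natAbs)) / ((n:ℝ) * Real.log n)) atTop (nhds (2 * min t₁ t₂)) := by
  rcases le_total t₁ t₂ with h | h
  · rw [min_eq_left h]; exact A_tendsto_le t₁ t₂ ht₁ ht₂ h
  · rw [min_eq_right h]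
    have := A_tendsto_le t₂ t₁ ht₂ ht₁ h
    apply this.congr
    intro n
    rw [double_symm]

end ARaux3

namespace ARaux4
open ARaux ARaux2

lemma hg_int {ψ : ℝ → ℝ} (hint : IntegrableOn ψ (Set.Ico (0:ℝ) 1)) :
    IntegrableOn (fun a => ψ a / (1+a)) (Set.Ico (0:ℝ) 1) := by
  have he : (fun a : ℝ => ψ a / (1+a)) = fun a => (1+a)⁻¹ * ψ a := by
    funext a; rw [div_eq_mul_inv, mul_comm]
  rw [he]
  apply hint.bdd_mul (c := 1)
    (((measurable_const.add measurable_id).inv).aestronglyMeasurable)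
  rw [MeasureTheory.ae_restrict_iff' measurableSet_Ico]
  apply MeasureTheory.ae_of_all
  intro a ha
  rcases ha with ⟨ha0, ha1⟩
  simp only [Pi.inv_apply, Pi.add_apply, id_eq]
  rw [Real.norm_eq_abs, abs_of_nonneg (by positivity)]
  rw [inv_le_one_iff₀]
  right; linarith

lemma hpow_mul_int {f : ℝ → ℝ} (hf : IntegrableOn f (Set.Ico (0:ℝ) 1)) (j : ℕ) :
    IntegrableOn (fun a => a^j * f a) (Set.Ico (0:ℝ) 1) := by
  apply hf.bdd_mul (c := 1) ((measurable_id.pow_const j).aestronglyMeasurable)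
  rw [MeasureTheory.ae_restrict_iff' measurableSet_Ico]
  apply MeasureTheory.ae_of_all
  intro a ha
  rcases ha with ⟨ha0, ha1⟩
  rw [Real.norm_eq_abs, abs_of_nonneg (by positivity)]
  calc a^j ≤ 1^j := pow_le_pow_left₀ ha0 (le_of_lt ha1) j
    _ = 1 := one_pow j

lemma integral_pow_Ico (j : ℕ) : ∫ a in Set.Ico (0:ℝ) 1, a^j = w j := by
  have h1 : ∫ a in Set.Ico (0:ℝ) 1, a^j = ∫ a in Set.Ioc (0:ℝ) 1, a^j := by
    rw [MeasureTheory.integral_Ico_eq_integral_Ioo, MeasureTheory.integral_Ioc_eq_integral_Ioo]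
  rw [h1, ← intervalIntegral.integral_of_le (by norm_num : (0:ℝ) ≤ 1)]
  rw [integral_pow]
  unfold w
  norm_num

lemma cj_est {ψ : ℝ → ℝ} (hint : IntegrableOn ψ (Set.Ico (0:ℝ) 1)) (ψ₁ : ℝ)
    (δ ε : ℝ) (hδ0 : 0 < δ) (hδ1 : δ < 1) (hε : 0 ≤ ε)
    (hδ : ∀ a ∈ Set.Ico (1-δ) (1:ℝ), |ψ a/(1+a) - ψ₁/2| ≤ ε) (j : ℕ) :
    |(∫ a in Set.Ico (0:ℝ) 1, a^j * (ψ a/(1+a))) - ψ₁/2 * w j|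
      ≤ (∫ a in Set.Ico (0:ℝ) 1, |ψ a/(1+a) - ψ₁/2|) * (1-δ)^j + ε * w j := by
  set g : ℝ → ℝ := fun a => ψ a/(1+a) with hgdef
  have hgint : IntegrableOn g (Set.Ico (0:ℝ) 1) := hg_int hint
  have hgs : IntegrableOn (fun a => g a - ψ₁/2) (Set.Ico (0:ℝ) 1) :=
    hgint.sub (integrableOn_const (by simp))
  have hpg : IntegrableOn (fun a => a^j * g a) (Set.Ico (0:ℝ) 1) := hpow_mul_int hgint j
  have hpgs : IntegrableOn (fun a => a^j * (g a - ψ₁/2)) (Set.Ico (0:ℝ) 1) :=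
    hpow_mul_int hgs j
  have hpow : IntegrableOn (fun a : ℝ => a^j) (Set.Ico (0:ℝ) 1) :=
    ((continuous_pow j).integrableOn_Icc (a := (0:ℝ)) (b := 1)).mono_set Set.Ico_subset_Icc_self
  -- step 1: rewrite difference
  have h1 : (∫ a in Set.Ico (0:ℝ) 1, a^j * g a) - ψ₁/2 * w j
      = ∫ a in Set.Ico (0:ℝ) 1, a^j * (g a - ψ₁/2) := by
    have : ∀ a : ℝ, a^j * (g a - ψ₁/2) = a^j * g a - (ψ₁/2) * a^j := by intro a; ring
    simp_rw [this]
    rw [MeasureTheory.integral_sub hpg ((hpow.const_mul (ψ₁/2)))]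
    rw [MeasureTheory.integral_const_mul, integral_pow_Ico]
  rw [h1]
  -- step 2: abs into integral
  have h2 : |∫ a in Set.Ico (0:ℝ) 1, a^j * (g a - ψ₁/2)|
      ≤ ∫ a in Set.Ico (0:ℝ) 1, |a^j * (g a - ψ₁/2)| := by
    simpa only [Real.norm_eq_abs] using
      MeasureTheory.norm_integral_le_integral_norm (μ := MeasureTheory.volume.restrict (Set.Ico (0:ℝ) 1))
        (f := fun a => a^j * (g a - ψ₁/2))
  refine h2.trans ?_
  -- step 3: split the integral
  have hsub1 : Set.Ico (0:ℝ) (1-δ) ⊆ Set.Ico (0:ℝ) 1 := Set.Ico_subset_Ico_right (by linarith)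
  have hsub2 : Set.Ico (1-δ) (1:ℝ) ⊆ Set.Ico (0:ℝ) 1 := Set.Ico_subset_Ico_left (by linarith)
  have habs_int : IntegrableOn (fun a => |a^j * (g a - ψ₁/2)|) (Set.Ico (0:ℝ) 1) := hpgs.abs
  have hunion : Set.Ico (0:ℝ) (1-δ) ∪ Set.Ico (1-δ) (1:ℝ) = Set.Ico (0:ℝ) 1 :=
    Set.Ico_union_Ico_eq_Ico (by linarith) (by linarith)
  have hsplit : ∫ a in Set.Ico (0:ℝ) 1, |a^j * (g a - ψ₁/2)|
      = (∫ a in Set.Ico (0:ℝ) (1-δ), |a^j * (g a - ψ₁/2)|)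
        + ∫ a in Set.Ico (1-δ) (1:ℝ), |a^j * (g a - ψ₁/2)| := by
    rw [← hunion, MeasureTheory.setIntegral_union (Set.Ico_disjoint_Ico_same)
      measurableSet_Ico (habs_int.mono_set hsub1) (habs_int.mono_set hsub2)]
  rw [hsplit]
  have hK : IntegrableOn (fun a => |g a - ψ₁/2|) (Set.Ico (0:ℝ) 1) := hgs.abs
  -- first piece
  have hp1 : (∫ a in Set.Ico (0:ℝ) (1-δ), |a^j * (g a - ψ₁/2)|)
      ≤ (∫ a in Set.Ico (0:ℝ) 1, |g a - ψ₁/2|) * (1-δ)^j := by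
    have hstep : (∫ a in Set.Ico (0:ℝ) (1-δ), |a^j * (g a - ψ₁/2)|)
        ≤ ∫ a in Set.Ico (0:ℝ) (1-δ), (1-δ)^j * |g a - ψ₁/2| := by
      apply MeasureTheory.setIntegral_mono_on (habs_int.mono_set hsub1)
        ((hK.mono_set hsub1).const_mul _) measurableSet_Ico
      intro a ha
      rcases ha with ⟨ha0, ha1⟩
      rw [abs_mul, abs_pow, abs_of_nonneg ha0]
      apply mul_le_mul_of_nonneg_right _ (abs_nonneg _)
      exact pow_le_pow_left₀ ha0 (le_of_lt ha1) j
    refine hstep.trans ?_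
    rw [MeasureTheory.integral_const_mul]
    have hmono : (∫ a in Set.Ico (0:ℝ) (1-δ), |g a - ψ₁/2|)
        ≤ ∫ a in Set.Ico (0:ℝ) 1, |g a - ψ₁/2| := by
      apply MeasureTheory.setIntegral_mono_set hK
      · exact MeasureTheory.ae_of_all _ (fun a => abs_nonneg _)
      · exact hsub1.eventuallyLE
    have hpownn : (0:ℝ) ≤ (1-δ)^j := pow_nonneg (by linarith) j
    nlinarith [hmono]
  -- second piece
  have hp2 : (∫ a in Set.Ico (1-δ) (1:ℝ), |a^j * (g a - ψ₁/2)|) ≤ ε * w j := by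
    have hstep : (∫ a in Set.Ico (1-δ) (1:ℝ), |a^j * (g a - ψ₁/2)|)
        ≤ ∫ a in Set.Ico (1-δ) (1:ℝ), ε * a^j := by
      apply MeasureTheory.setIntegral_mono_on (habs_int.mono_set hsub2)
        ((hpow.mono_set hsub2).const_mul _) measurableSet_Ico
      intro a ha
      have ha0 : 0 ≤ a := by rcases ha with ⟨h', _⟩; linarith
      rw [abs_mul, abs_pow, abs_of_nonneg ha0, mul_comm ε]
      exact mul_le_mul_of_nonneg_left (hδ a ha) (by positivity)
    refine hstep.trans ?_
    rw [MeasureTheory.integral_const_mul]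
    apply mul_le_mul_of_nonneg_left _ hε
    rw [← integral_pow_Ico j]
    apply MeasureTheory.setIntegral_mono_set hpow
    · filter_upwards [MeasureTheory.ae_restrict_mem measurableSet_Ico] with a ha
      rcases ha with ⟨h0, _⟩
      positivity
    · exact hsub2.eventuallyLE
  linarith

end ARaux4

namespace ARaux5
open ARaux ARaux2 ARaux3 ARaux4

lemma integral_eq_sum (ψ : ℝ → ℝ) (hint : IntegrableOn ψ (Set.Ico (0:ℝ) 1)) (m₁ m₂ : ℕ) :
    (∫ a in Set.Icc (0:ℝ) 1,
        ∑ k ∈ Finset.Icc 1 m₁, ∑ ℓ ∈ Finset.Icc 1 m₂,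
          a ^ (((k:ℤ) - ℓ).natAbs) / (1 - a^2) * (ψ a * (1 - a)))
      = ∑ k ∈ Finset.Icc 1 m₁, ∑ ℓ ∈ Finset.Icc 1 m₂,
          ∫ a in Set.Ico (0:ℝ) 1, a ^ (((k:ℤ) - ℓ).natAbs) * (ψ a/(1+a)) := by
  have hgint := hg_int hint
  rw [MeasureTheory.integral_Icc_eq_integral_Ico]
  have hcongr : ∀ a ∈ Set.Ico (0:ℝ) 1,
      (∑ k ∈ Finset.Icc 1 m₁, ∑ ℓ ∈ Finset.Icc 1 m₂,
          a ^ (((k:ℤ) - ℓ).natAbs) / (1 - a^2) * (ψ a * (1 - a)))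
        = ∑ k ∈ Finset.Icc 1 m₁, ∑ ℓ ∈ Finset.Icc 1 m₂,
            a ^ (((k:ℤ) - ℓ).natAbs) * (ψ a/(1+a)) := by
    intro a ha
    rcases ha with ⟨ha0, ha1⟩
    refine Finset.sum_congr rfl fun k _ => Finset.sum_congr rfl fun ℓ _ => ?_
    have h1 : (1:ℝ) - a ≠ 0 := by linarith
    have h2 : (1:ℝ) + a ≠ 0 := by linarith
    have h3 : (1:ℝ) - a^2 = (1-a)*(1+a) := by ring
    rw [h3]
    field_simp
  rw [MeasureTheory.setIntegral_congr_fun measurableSet_Ico hcongr]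
  rw [MeasureTheory.integral_finset_sum _
    (fun k _ => MeasureTheory.integrable_finset_sum _
      (fun ℓ _ => hpow_mul_int hgint _))]
  exact Finset.sum_congr rfl fun k _ =>
    MeasureTheory.integral_finset_sum _ (fun ℓ _ => hpow_mul_int hgint _)

lemma sum_est (m₁ m₂ : ℕ) (c b : ℕ → ℝ) (d : ℝ)
    (h : ∀ j, |c j - d * w j| ≤ b j) :
    |(∑ k ∈ Finset.Icc 1 m₁, ∑ ℓ ∈ Finset.Icc 1 m₂, c (((k:ℤ)-ℓ).natAbs))
      - d * ∑ k ∈ Finset.Icc 1 m₁, ∑ ℓ ∈ Finset.Icc 1 m₂, w (((k:ℤ)-ℓ).natAbs)|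
      ≤ ∑ k ∈ Finset.Icc 1 m₁, ∑ ℓ ∈ Finset.Icc 1 m₂, b (((k:ℤ)-ℓ).natAbs) := by
  simp_rw [Finset.mul_sum, ← Finset.sum_sub_distrib]
  refine (Finset.abs_sum_le_sum_abs _ _).trans (Finset.sum_le_sum fun k _ => ?_)
  exact (Finset.abs_sum_le_sum_abs _ _).trans (Finset.sum_le_sum fun ℓ _ => h _)

lemma G_upper' (m₁ m₂ : ℕ) (q : ℝ) (hq0 : 0 ≤ q) (hq1 : q < 1) :
    ∑ k ∈ Finset.Icc 1 m₁, ∑ ℓ ∈ Finset.Icc 1 m₂, q ^ (((k:ℤ) - ℓ).natAbs)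
      ≤ ((max m₁ m₂ : ℕ) : ℝ) * (2/(1-q)) := by
  set M := max m₁ m₂ with hM
  have h1 : ∑ k ∈ Finset.Icc 1 m₁, ∑ ℓ ∈ Finset.Icc 1 m₂, q ^ (((k:ℤ) - ℓ).natAbs)
      ≤ ∑ k ∈ Finset.Icc 1 M, ∑ ℓ ∈ Finset.Icc 1 m₂, q ^ (((k:ℤ) - ℓ).natAbs) :=
    Finset.sum_le_sum_of_subset_of_nonneg
      (Finset.Icc_subset_Icc_right (le_max_left m₁ m₂))
      (fun k _ _ => Finset.sum_nonneg fun ℓ _ => by positivity)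
  have h2 : ∑ k ∈ Finset.Icc 1 M, ∑ ℓ ∈ Finset.Icc 1 m₂, q ^ (((k:ℤ) - ℓ).natAbs)
      ≤ ∑ k ∈ Finset.Icc 1 M, ∑ ℓ ∈ Finset.Icc 1 M, q ^ (((k:ℤ) - ℓ).natAbs) :=
    Finset.sum_le_sum fun k _ =>
      Finset.sum_le_sum_of_subset_of_nonneg
        (Finset.Icc_subset_Icc_right (le_max_right m₁ m₂))
        (fun ℓ _ _ => by positivity)
  exact (h1.trans h2).trans (G_upper M M le_rfl q hq0 hq1)

lemma Sw_nonneg (m₁ m₂ : ℕ) :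
    0 ≤ ∑ k ∈ Finset.Icc 1 m₁, ∑ ℓ ∈ Finset.Icc 1 m₂, w (((k:ℤ)-ℓ).natAbs) :=
  Finset.sum_nonneg fun k _ => Finset.sum_nonneg fun ℓ _ => w_nonneg _

end ARaux5

open ARaux ARaux2 ARaux3 ARaux4 ARaux5 in
theorem AR_integral_double_sum_limit (ψ : ℝ → ℝ) (ψ₁ : ℝ) (hψ₁ : 0 < ψ₁)
    (hnonneg : ∀ x ∈ Set.Ico (0 : ℝ) 1, 0 ≤ ψ x)
    (hint : IntegrableOn ψ (Set.Ico (0 : ℝ) 1))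
    (hlim : Tendsto ψ (nhdsWithin 1 (Set.Iio 1)) (nhds ψ₁))
    (σ : ℝ) (hσ : 0 < σ)
    (t₁ t₂ : ℝ) (ht₁ : 0 < t₁) (ht₂ : 0 < t₂) :
    Tendsto (fun n : ℕ =>
      (σ ^ 2 / (n * Real.log n)) *
        ∫ a in Set.Icc (0 : ℝ) 1,
          ∑ k ∈ Finset.Icc 1 ⌊(n : ℝ) * t₁⌋₊, ∑ ℓ ∈ Finset.Icc 1 ⌊(n : ℝ) * t₂⌋₊,
            a ^ (((k : ℤ) - ℓ).natAbs) / (1 - a ^ 2) * (ψ a * (1 - a)))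
      atTop (nhds (σ ^ 2 * ψ₁ * min t₁ t₂)) := by
  classical
  set cf : ℕ → ℝ := fun j => ∫ a in Set.Ico (0:ℝ) 1, a ^ j * (ψ a/(1+a)) with hcf
  have hmin : 0 < min t₁ t₂ := lt_min ht₁ ht₂
  have htmax : 0 < max t₁ t₂ := lt_of_lt_of_le ht₁ (le_max_left _ _)
  have hMain : Tendsto (fun n : ℕ =>
      (∑ k ∈ Finset.Icc 1 ⌊(n : ℝ) * t₁⌋₊, ∑ ℓ ∈ Finset.Icc 1 ⌊(n : ℝ) * t₂⌋₊,
        cf (((k : ℤ) - ℓ).natAbs)) / ((n:ℝ) * Real.log n)) atTop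
      (nhds (ψ₁ * min t₁ t₂)) := by
    have hA := A_tendsto t₁ t₂ ht₁ ht₂
    rw [Metric.tendsto_nhds]
    intro ε hε
    set C : ℝ := 2 * min t₁ t₂ + 1 with hC
    have hC0 : 0 < C := by rw [hC]; linarith
    set ε' : ℝ := ε/(3*C) with hε'
    have hε'0 : 0 < ε' := by rw [hε']; positivity
    -- choose δ from the limit of ψ at 1
    have hgl : Tendsto (fun a => ψ a/(1+a)) (nhdsWithin 1 (Set.Iio 1)) (nhds (ψ₁/2)) := by
      have h2' : Tendsto (fun a : ℝ => 1 + a) (nhds 1) (nhds ((fun a : ℝ => 1 + a) 1)) :=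
        (continuous_const.add continuous_id).tendsto 1
      have h2 : Tendsto (fun a : ℝ => 1 + a) (nhdsWithin 1 (Set.Iio 1)) (nhds 2) := by
        refine Tendsto.mono_left ?_ nhdsWithin_le_nhds
        convert h2' using 2
        norm_num
      exact hlim.div h2 (by norm_num)
    rw [Metric.tendsto_nhdsWithin_nhds] at hgl
    obtain ⟨δ₀, hδ₀pos, hδ₀⟩ := hgl ε' hε'0
    set δ : ℝ := min (δ₀/2) (1/2) with hδdef
    have hδ0 : 0 < δ := lt_min (by linarith) (by norm_num)
    have hδ1 : δ < 1 := lt_of_le_of_lt (min_le_right _ _) (by norm_num)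
    have hδbound : ∀ a ∈ Set.Ico (1-δ) (1:ℝ), |ψ a/(1+a) - ψ₁/2| ≤ ε' := by
      rintro a ⟨ha1, ha2⟩
      have hd : dist a 1 < δ₀ := by
        rw [Real.dist_eq, abs_of_nonpos (by linarith)]
        have : δ ≤ δ₀/2 := min_le_left _ _
        linarith
      have := hδ₀ ha2 hd
      rw [Real.dist_eq] at this
      exact this.le
    set K : ℝ := ∫ a in Set.Ico (0:ℝ) 1, |ψ a/(1+a) - ψ₁/2| with hKdef
    have hK0 : 0 ≤ K := by
      rw [hKdef]; exact MeasureTheory.integral_nonneg (fun a => abs_nonneg _)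
    have hcj : ∀ j, |cf j - ψ₁/2 * w j| ≤ K * (1-δ)^j + ε' * w j := fun j =>
      cj_est hint ψ₁ δ ε' hδ0 hδ1 hε'0.le hδbound j
    -- eventual bounds
    have hT1 : Tendsto (fun n : ℕ =>
        (K * (2/δ)) * (((⌊(n:ℝ) * max t₁ t₂⌋₊ : ℝ)/n) * (1/Real.log n))) atTop
        (nhds ((K * (2/δ)) * (max t₁ t₂ * 0))) :=
      ((floor_div_tendsto (max t₁ t₂) htmax).mul hinvlog).const_mul _
    rw [show (K * (2/δ)) * (max t₁ t₂ * 0) = 0 by ring] at hT1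
    have hev1 := Filter.Tendsto.eventually_lt_const (show (0:ℝ) < ε/3 by linarith) hT1
    have hev2 := Filter.Tendsto.eventually_lt_const
      (show 2 * min t₁ t₂ < C by rw [hC]; linarith) hA
    have hev3 : ∀ᶠ n : ℕ in atTop,
        dist ((∑ k ∈ Finset.Icc 1 ⌊(n : ℝ) * t₁⌋₊, ∑ ℓ ∈ Finset.Icc 1 ⌊(n : ℝ) * t₂⌋₊,
          w (((k : ℤ) - ℓ).natAbs)) / ((n:ℝ) * Real.log n)) (2 * min t₁ t₂)
          < 2*ε/(3*ψ₁) :=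
      Metric.tendsto_nhds.mp hA _ (by positivity)
    filter_upwards [hev1, hev2, hev3, eventually_ge_atTop 2] with n h1 h2 h3 hn2
    set m₁ := ⌊(n:ℝ)*t₁⌋₊ with hm₁
    set m₂ := ⌊(n:ℝ)*t₂⌋₊ with hm₂
    set Sc := ∑ k ∈ Finset.Icc 1 m₁, ∑ ℓ ∈ Finset.Icc 1 m₂, cf (((k:ℤ)-ℓ).natAbs) with hSc
    set Sw := ∑ k ∈ Finset.Icc 1 m₁, ∑ ℓ ∈ Finset.Icc 1 m₂, w (((k:ℤ)-ℓ).natAbs) with hSw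
    set Sq := ∑ k ∈ Finset.Icc 1 m₁, ∑ ℓ ∈ Finset.Icc 1 m₂,
      (1-δ) ^ (((k:ℤ)-ℓ).natAbs) with hSq
    have hn1 : (1:ℝ) < (n:ℝ) := by exact_mod_cast hn2
    have hlnpos : 0 < Real.log n := Real.log_pos hn1
    have hP : 0 < (n:ℝ) * Real.log n := mul_pos (by linarith) hlnpos
    have hEst : |Sc - ψ₁/2 * Sw| ≤ K * Sq + ε' * Sw := by
      have h := sum_est m₁ m₂ cf (fun j => K * (1-δ)^j + ε' * w j) (ψ₁/2) hcj
      refine h.trans (le_of_eq ?_)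
      simp_rw [Finset.sum_add_distrib, ← Finset.mul_sum]
      rfl
    have hmaxeq : ((max m₁ m₂ : ℕ) : ℝ) = (⌊(n:ℝ) * max t₁ t₂⌋₊ : ℝ) := by
      congr 1
      rw [mul_max_of_nonneg _ _ (Nat.cast_nonneg n)]
      exact (Monotone.map_max (f := fun x : ℝ => ⌊x⌋₊) (a := (n:ℝ)*t₁) (b := (n:ℝ)*t₂)
        Nat.floor_mono).symm
    have hSqB : Sq ≤ (⌊(n:ℝ) * max t₁ t₂⌋₊ : ℝ) * (2/δ) := by
      rw [← hmaxeq]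
      have hG := G_upper' m₁ m₂ (1-δ) (by linarith) (by linarith)
      rw [show (1:ℝ) - (1 - δ) = δ by ring] at hG
      exact hG
    have hSw0 : 0 ≤ Sw := Sw_nonneg m₁ m₂
    rw [Real.dist_eq] at h3 ⊢
    have hb1 : K * (Sq/((n:ℝ) * Real.log n)) < ε/3 := by
      calc K * (Sq/((n:ℝ) * Real.log n))
          ≤ K * (((⌊(n:ℝ) * max t₁ t₂⌋₊ : ℝ) * (2/δ))/((n:ℝ) * Real.log n)) := by
            apply mul_le_mul_of_nonneg_left _ hK0
            exact div_le_div_of_nonneg_right hSqB hP.le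
        _ = (K * (2/δ)) * (((⌊(n:ℝ) * max t₁ t₂⌋₊ : ℝ)/n) * (1/Real.log n)) := by
            ring
        _ < ε/3 := h1
    have hb2 : ε' * (Sw/((n:ℝ) * Real.log n)) ≤ ε/3 := by
      have hle : ε' * (Sw/((n:ℝ) * Real.log n)) ≤ ε' * C :=
        mul_le_mul_of_nonneg_left h2.le hε'0.le
      have heq : ε' * C = ε/3 := by
        rw [hε']; field_simp
      linarith
    have hb3 : (ψ₁/2) * |Sw/((n:ℝ) * Real.log n) - 2 * min t₁ t₂| < ε/3 := by
      have := mul_lt_mul_of_pos_left h3 (show (0:ℝ) < ψ₁/2 by linarith)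
      have heq : (ψ₁/2) * (2*ε/(3*ψ₁)) = ε/3 := by
        field_simp
      linarith
    calc |Sc/((n:ℝ) * Real.log n) - ψ₁ * min t₁ t₂|
        = |(Sc - ψ₁/2 * Sw)/((n:ℝ) * Real.log n)
            + (ψ₁/2) * (Sw/((n:ℝ) * Real.log n) - 2 * min t₁ t₂)| := by
          congr 1; ring
      _ ≤ |(Sc - ψ₁/2 * Sw)/((n:ℝ) * Real.log n)|
            + |(ψ₁/2) * (Sw/((n:ℝ) * Real.log n) - 2 * min t₁ t₂)| := abs_add_le _ _
      _ = |Sc - ψ₁/2 * Sw|/((n:ℝ) * Real.log n)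
            + (ψ₁/2) * |Sw/((n:ℝ) * Real.log n) - 2 * min t₁ t₂| := by
          rw [abs_div, abs_of_pos hP, abs_mul, abs_of_pos (show (0:ℝ) < ψ₁/2 by linarith)]
      _ ≤ (K * Sq + ε' * Sw)/((n:ℝ) * Real.log n)
            + (ψ₁/2) * |Sw/((n:ℝ) * Real.log n) - 2 * min t₁ t₂| := by
          have := div_le_div_of_nonneg_right hEst hP.le
          linarith
      _ = K * (Sq/((n:ℝ) * Real.log n)) + ε' * (Sw/((n:ℝ) * Real.log n))
            + (ψ₁/2) * |Sw/((n:ℝ) * Real.log n) - 2 * min t₁ t₂| := by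
          ring
      _ < ε := by linarith
  have hfun : ∀ n : ℕ,
      (σ ^ 2 / ((n:ℝ) * Real.log n)) *
        ∫ a in Set.Icc (0 : ℝ) 1,
          ∑ k ∈ Finset.Icc 1 ⌊(n : ℝ) * t₁⌋₊, ∑ ℓ ∈ Finset.Icc 1 ⌊(n : ℝ) * t₂⌋₊,
            a ^ (((k : ℤ) - ℓ).natAbs) / (1 - a ^ 2) * (ψ a * (1 - a))
      = σ ^ 2 * ((∑ k ∈ Finset.Icc 1 ⌊(n : ℝ) * t₁⌋₊, ∑ ℓ ∈ Finset.Icc 1 ⌊(n : ℝ) * t₂⌋₊,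
            cf (((k : ℤ) - ℓ).natAbs)) / ((n:ℝ) * Real.log n)) := by
    intro n
    rw [integral_eq_sum ψ hint]
    ring
  have hfinal := hMain.const_mul (σ^2)
  rw [show σ^2 * (ψ₁ * min t₁ t₂) = σ^2 * ψ₁ * min t₁ t₂ by ring] at hfinal
  exact hfinal.congr (fun n => (hfun n).symm)
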